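/- Let U and Y be complex Hilbert spaces, F a closed subspace of U, and ω = (ω₁, ω₂) : F → Y ⊕ U a contraction such that ω₁ (Π_F ω₂)ⁿ : F → Y is a co-isometry for every integer n ≥ 0. Then for all integers m, n ≥ 0 and all y, y' ∈ Y: ⟨((Π_F ω₂)*)^m ω₁* y, ((Π_F ω₂)*)ⁿ ω₁* y'⟩ equals ⟨y, y'⟩ if m = n, and equals 0 if m ≠ n. In particular, the subspaces F_n = closure(((Π_F ω₂)*)ⁿ ω₁* Y) of F are mutually orthogonal and each F_n has the same dimension as Y. -/

import Mathlib

set_option maxHeartbeats 1000000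

/-- if every `ω₁ (Π_F ω₂)ⁿ` is a co-isometry, then the vectors
`((Π_F ω₂)*)^m ω₁* y` form mutually orthogonal copies of `Y`: the inner products are
`⟨y, y'⟩` for `m = n` and `0` for `m ≠ n`; in particular the subspaces
`F_n = closure(((Π_F ω₂)*)ⁿ ω₁* Y)` are mutually orthogonal and each is isometrically
isomorphic to `Y` (i.e. has the same dimension as `Y`). -/
theorem stmt_11
    {U Y : Type*}
    [NormedAddCommGroup U] [InnerProductSpace ℂ U] [CompleteSpace U]
    [NormedAddCommGroup Y] [InnerProductSpace ℂ Y] [CompleteSpace Y]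
    (F : Submodule ℂ U) [CompleteSpace F]
    (ω₁ : F →L[ℂ] Y) (ω₂ : F →L[ℂ] U)
    (hcontr : ∀ f : F, ‖ω₁ f‖ ^ 2 + ‖ω₂ f‖ ^ 2 ≤ ‖f‖ ^ 2)
    (hcoiso : ∀ n : ℕ,
      (ω₁.comp ((F.orthogonalProjectionOnto.comp ω₂) ^ n)).comp
        (ω₁.comp ((F.orthogonalProjectionOnto.comp ω₂) ^ n)).adjoint = 1) :
    (∀ (m n : ℕ) (y y' : Y),
      (inner ℂ (((F.orthogonalProjectionOnto.comp ω₂).adjoint ^ m) (ω₁.adjoint y))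
          (((F.orthogonalProjectionOnto.comp ω₂).adjoint ^ n) (ω₁.adjoint y')) : ℂ) =
        if m = n then (inner ℂ y y' : ℂ) else 0) ∧
    (∀ m n : ℕ, m ≠ n →
      ∀ x ∈ (LinearMap.range
          ((((F.orthogonalProjectionOnto.comp ω₂).adjoint ^ m).comp
            ω₁.adjoint : Y →ₗ[ℂ] F))).topologicalClosure,
      ∀ z ∈ (LinearMap.range
          ((((F.orthogonalProjectionOnto.comp ω₂).adjoint ^ n).comp
            ω₁.adjoint : Y →ₗ[ℂ] F))).topologicalClosure,
        (inner ℂ x z : ℂ) = 0) ∧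
    (∀ n : ℕ, Nonempty
      ((LinearMap.range
          ((((F.orthogonalProjectionOnto.comp ω₂).adjoint ^ n).comp
            ω₁.adjoint : Y →ₗ[ℂ] F))).topologicalClosure ≃ₗᵢ[ℂ] Y)) := by
  set T : F →L[ℂ] F := F.orthogonalProjectionOnto.comp ω₂ with hTdef
  -- adjoint of powers
  have hadj : ∀ k : ℕ, (T ^ k).adjoint = T.adjoint ^ k := by
    intro k
    simpa only [ContinuousLinearMap.star_eq_adjoint] using star_pow T k
  set a : ℕ → Y → F := fun n y => (T.adjoint ^ n) (ω₁.adjoint y) with hadef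
  -- pointwise coisometry
  have hco : ∀ (n : ℕ) (y : Y), ω₁ ((T ^ n) (a n y)) = y := by
    intro n y
    have h := ContinuousLinearMap.ext_iff.mp (hcoiso n) y
    rw [ContinuousLinearMap.adjoint_comp] at h
    simpa only [a, ContinuousLinearMap.comp_apply, ContinuousLinearMap.one_apply, hadj] using h
  -- same-index inner products
  have hinner_eq : ∀ (n : ℕ) (y y' : Y), (inner ℂ (a n y) (a n y') : ℂ) = inner ℂ y y' := by
    intro n y y'
    have h1 : (inner ℂ (a n y) (a n y') : ℂ) = inner ℂ (ω₁.adjoint y) ((T ^ n) (a n y')) := by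
      simp only [a, ← hadj]
      exact ContinuousLinearMap.adjoint_inner_left _ _ _
    rw [h1, ContinuousLinearMap.adjoint_inner_left, hco]
  have hnorm_a : ∀ (n : ℕ) (y : Y), ‖a n y‖ = ‖y‖ := by
    intro n y
    have h := hinner_eq n y y
    rw [inner_self_eq_norm_sq_to_K, inner_self_eq_norm_sq_to_K] at h
    rw [← RCLike.ofReal_pow, ← RCLike.ofReal_pow] at h
    have h2 : ‖a n y‖ ^ 2 = ‖y‖ ^ 2 := RCLike.ofReal_injective (K := ℂ) h
    nlinarith [norm_nonneg (a n y), norm_nonneg y]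
  -- contraction facts
  have hω₂ : ∀ f : F, ‖ω₂ f‖ ≤ ‖f‖ := by
    intro f
    nlinarith [hcontr f, sq_nonneg (‖ω₁ f‖), norm_nonneg (ω₂ f), norm_nonneg f]
  have hTle : ∀ f : F, ‖T f‖ ≤ ‖ω₂ f‖ := by
    intro f
    calc ‖T f‖ = ‖F.orthogonalProjectionOnto (ω₂ f)‖ := rfl
      _ ≤ ‖F.orthogonalProjectionOnto‖ * ‖ω₂ f‖ := F.orthogonalProjectionOnto.le_opNorm _
      _ ≤ 1 * ‖ω₂ f‖ :=
          mul_le_mul_of_nonneg_right (Submodule.orthogonalProjectionOnto_norm_le F) (norm_nonneg _)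
      _ = ‖ω₂ f‖ := one_mul _
  have hT1 : ∀ f : F, ‖T f‖ ≤ ‖f‖ := fun f => (hTle f).trans (hω₂ f)
  have hTj : ∀ (j : ℕ) (x : F), ‖(T ^ j) x‖ ≤ ‖x‖ := by
    intro j
    induction j with
    | zero => intro x; simp
    | succ j ih =>
      intro x
      rw [pow_succ', ContinuousLinearMap.mul_def, ContinuousLinearMap.comp_apply]
      exact (hT1 _).trans (ih x)
  have hω₁le : ∀ f : F, ‖ω₁ f‖ ≤ ‖f‖ := by
    intro f
    nlinarith [hcontr f, sq_nonneg (‖ω₂ f‖), norm_nonneg (ω₁ f), norm_nonneg f]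
  -- intermediate norms
  have htail : ∀ (n : ℕ) (y : Y) (j : ℕ), j ≤ n → ‖(T ^ j) (a n y)‖ = ‖y‖ := by
    intro n y j hj
    have hup : ‖(T ^ j) (a n y)‖ ≤ ‖y‖ := by
      calc ‖(T ^ j) (a n y)‖ ≤ ‖a n y‖ := hTj j _
        _ = ‖y‖ := hnorm_a n y
    have hlow : ‖y‖ ≤ ‖(T ^ j) (a n y)‖ := by
      have hpow : T ^ n = (T ^ (n - j)).comp (T ^ j) := by
        rw [← ContinuousLinearMap.mul_def, ← pow_add, Nat.sub_add_cancel hj]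
      have hsplit : (T ^ n) (a n y) = (T ^ (n - j)) ((T ^ j) (a n y)) := by
        rw [hpow]; rfl
      calc ‖y‖ = ‖ω₁ ((T ^ n) (a n y))‖ := by rw [hco]
        _ ≤ ‖(T ^ n) (a n y)‖ := hω₁le _
        _ = ‖(T ^ (n - j)) ((T ^ j) (a n y))‖ := by rw [hsplit]
        _ ≤ ‖(T ^ j) (a n y)‖ := hTj _ _
    linarith
  -- ω₁ kills intermediate vectors
  have hkill : ∀ (n : ℕ) (y : Y) (j : ℕ), j < n → ω₁ ((T ^ j) (a n y)) = 0 := by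
    intro n y j hj
    set f := (T ^ j) (a n y) with hf
    have hTf : T f = (T ^ (j + 1)) (a n y) := by
      rw [hf, pow_succ']; rfl
    have h1 : ‖T f‖ = ‖y‖ := by rw [hTf]; exact htail n y (j + 1) hj
    have h2 : ‖f‖ = ‖y‖ := htail n y j hj.le
    have h3 : ‖T f‖ ≤ ‖ω₂ f‖ := hTle f
    have h4 := hcontr f
    have h5 : ‖y‖ ≤ ‖ω₂ f‖ := h1 ▸ h3
    have h6 : ‖y‖ ^ 2 ≤ ‖ω₂ f‖ ^ 2 := by nlinarith [norm_nonneg y]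
    have h7 : ‖f‖ ^ 2 = ‖y‖ ^ 2 := by rw [h2]
    have h8 : ‖ω₁ f‖ ^ 2 ≤ 0 := by linarith
    have : ‖ω₁ f‖ = 0 := sq_eq_zero_iff.mp (le_antisymm h8 (sq_nonneg _))
    exact norm_eq_zero.mp this
  -- different-index inner products vanish
  have hzero : ∀ (m n : ℕ) (y y' : Y), m < n → (inner ℂ (a m y) (a n y') : ℂ) = 0 := by
    intro m n y y' hmn
    have h1 : (inner ℂ (a m y) (a n y') : ℂ) = inner ℂ (ω₁.adjoint y) ((T ^ m) (a n y')) := by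
      simp only [a, ← hadj]
      exact ContinuousLinearMap.adjoint_inner_left _ _ _
    rw [h1, ContinuousLinearMap.adjoint_inner_left, hkill n y' m hmn, inner_zero_right]
  have main1 : ∀ (m n : ℕ) (y y' : Y),
      (inner ℂ (a m y) (a n y') : ℂ) = if m = n then (inner ℂ y y' : ℂ) else 0 := by
    intro m n y y'
    rcases lt_trichotomy m n with h | h | h
    · rw [if_neg h.ne, hzero m n y y' h]
    · rw [if_pos h, h, hinner_eq]
    · rw [if_neg h.ne', ← inner_conj_symm, hzero n m y' y h, map_zero]
  refine ⟨main1, ?_, ?_⟩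
  · -- orthogonality of closures
    intro m n hmn x hx z hz
    set P := LinearMap.range ((T.adjoint ^ m).comp ω₁.adjoint : Y →ₗ[ℂ] F) with hP
    set Q := LinearMap.range ((T.adjoint ^ n).comp ω₁.adjoint : Y →ₗ[ℂ] F) with hQ
    have hPQ : P ≤ Qᗮ := by
      rintro u ⟨y, rfl⟩
      rw [Submodule.mem_orthogonal]
      rintro v ⟨y', rfl⟩
      have := main1 n m y' y
      rw [if_neg (Ne.symm hmn)] at this
      exact this
    have hPc : P.topologicalClosure ≤ Qᗮ :=
      Submodule.topologicalClosure_minimal P hPQ Q.isClosed_orthogonal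
    have hQP : Q ≤ P.topologicalClosureᗮ := by
      intro v hv
      rw [Submodule.mem_orthogonal]
      intro u hu
      have h1 : (inner ℂ v u : ℂ) = 0 := (Submodule.mem_orthogonal Q u).mp (hPc hu) v hv
      rw [← inner_conj_symm, h1, map_zero]
    have hQc : Q.topologicalClosure ≤ P.topologicalClosureᗮ :=
      Submodule.topologicalClosure_minimal Q hQP P.topologicalClosure.isClosed_orthogonal
    exact (Submodule.mem_orthogonal _ _).mp (hQc hz) x hx
  · -- isometric isomorphism with Y
    intro n
    set g : Y →ₗᵢ[ℂ] F :=
      ⟨(((T.adjoint ^ n).comp ω₁.adjoint : Y →L[ℂ] F) : Y →ₗ[ℂ] F), fun y => hnorm_a n y⟩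
      with hg
    have hrange : LinearMap.range ((T.adjoint ^ n).comp ω₁.adjoint : Y →ₗ[ℂ] F)
        = LinearMap.range g.toLinearMap := by
      ext x; rfl
    have hclosed : IsClosed ((LinearMap.range g.toLinearMap : Submodule ℂ F) : Set F) := by
      have h1 : Set.range g = ((LinearMap.range g.toLinearMap : Submodule ℂ F) : Set F) := by
        ext x; simp [LinearMap.mem_range, Set.mem_range]
      rw [← h1]
      exact g.isometry.isClosedEmbedding.isClosed_range
    have heq : (LinearMap.range ((T.adjoint ^ n).comp ω₁.adjoint : Y →ₗ[ℂ] F)).topologicalClosure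
        = LinearMap.range g.toLinearMap := by
      rw [hrange]
      exact IsClosed.submodule_topologicalClosure_eq hclosed
    exact ⟨(LinearIsometryEquiv.ofEq _ _ heq).trans g.equivRange.symm⟩
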